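/- In any ABA⁺ framework in which the empty set of assumptions is closed, there exists a <-preferred extension and an <-ideal extension. -/

import Mathlib

universe u

/-- An ABA framework: a deductive system `(ℒ, R)`, a nonempty set of assumptions,
and a total contrary map on assumptions (modelled as a total map on `ℒ`). -/
structure ABAF (L : Type u) where
  rules : Set (L × List L)
  asms : Set L
  asms_nonempty : asms.Nonempty
  contrary : L → L

namespace ABAF

variable {L : Type u}

/-- There is a deduction for `φ` supported by `S` (and rules of `F`):
a finite tree with root `φ`, leaves labelled by `⊤` or elements of `S`,
children of non-leaf nodes given by bodies of rules with matching heads. -/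
inductive Ded (F : ABAF L) (S : Set L) : L → Prop
  | assumption {φ : L} : φ ∈ S → Ded F S φ
  | rule {φ : L} {body : List L} : (φ, body) ∈ F.rules →
      (∀ ψ ∈ body, Ded F S ψ) → Ded F S φ

/-- The conclusions of `E`: all sentences deducible from subsets of `E`. -/
def cn (F : ABAF L) (E : Set L) : Set L := {φ | F.Ded E φ}

/-- The closure of `E`: all assumptions deducible from `E`. -/
def cl (F : ABAF L) (E : Set L) : Set L := F.cn E ∩ F.asms

/-- `E` is closed iff it coincides with its closure. -/
def Closed (F : ABAF L) (E : Set L) : Prop := F.cl E = E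

/-- `A` attacks `B` iff some `A' ⊆ A` supports a deduction of the contrary of some `β ∈ B`. -/
def Attacks (F : ABAF L) (A B : Set L) : Prop :=
  ∃ A' ⊆ A, ∃ β ∈ B, F.Ded A' (F.contrary β)

/-- A framework is flat iff every set of assumptions is closed. -/
def Flat (F : ABAF L) : Prop := ∀ E ⊆ F.asms, F.Closed E

def ConflictFree (F : ABAF L) (E : Set L) : Prop := ¬ F.Attacks E E

def Defends (F : ABAF L) (E A : Set L) : Prop :=
  ∀ B ⊆ F.asms, F.Closed B → F.Attacks B A → F.Attacks E B

def Admissible (F : ABAF L) (E : Set L) : Prop :=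
  E ⊆ F.asms ∧ F.Closed E ∧ F.ConflictFree E ∧ F.Defends E E

def Preferred (F : ABAF L) (E : Set L) : Prop :=
  F.Admissible E ∧ ∀ E', F.Admissible E' → E ⊆ E' → E' = E

def Complete (F : ABAF L) (E : Set L) : Prop :=
  F.Admissible E ∧ ∀ A ⊆ F.asms, F.Defends E A → A ⊆ E

def Stable (F : ABAF L) (E : Set L) : Prop :=
  E ⊆ F.asms ∧ F.Closed E ∧ F.ConflictFree E ∧
    ∀ β ∈ F.asms, β ∉ E → F.Attacks E {β}

def WellFounded (F : ABAF L) (E : Set L) : Prop :=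
  E = ⋂₀ {E' | F.Complete E'}

def Ideal (F : ABAF L) (E : Set L) : Prop :=
  (F.Admissible E ∧ ∀ P, F.Preferred P → E ⊆ P) ∧
    ∀ E', (F.Admissible E' ∧ ∀ P, F.Preferred P → E' ⊆ P) → E ⊆ E' → E' = E

end ABAF

/-- An ABA⁺ framework: an ABA framework with a transitive preference relation on assumptions. -/
structure ABAPlus (L : Type u) extends ABAF L where
  le : L → L → Prop
  le_trans : ∀ a b c, le a b → le b c → le a c

namespace ABAPlus

variable {L : Type u}

/-- The strict counterpart of the preference relation. -/
def lt (F : ABAPlus L) (a b : L) : Prop := F.le a b ∧ ¬ F.le b a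

/-- `A` <-attacks `B`: either a normal attack (a deduction from `A' ⊆ A` of the contrary of
some `β ∈ B` with no supporting assumption strictly less preferred than `β`),
or a reverse attack (a deduction from `B' ⊆ B` of the contrary of some `α ∈ A` using
some assumption strictly less preferred than `α`). -/
def LtAttacks (F : ABAPlus L) (A B : Set L) : Prop :=
  (∃ A' ⊆ A, ∃ β ∈ B, F.toABAF.Ded A' (F.contrary β) ∧ ∀ α' ∈ A', ¬ F.lt α' β) ∨
  (∃ B' ⊆ B, ∃ α ∈ A, F.toABAF.Ded B' (F.contrary α) ∧ ∃ β' ∈ B', F.lt β' α)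

def LtConflictFree (F : ABAPlus L) (E : Set L) : Prop := ¬ F.LtAttacks E E

def LtDefends (F : ABAPlus L) (E A : Set L) : Prop :=
  ∀ B ⊆ F.asms, F.toABAF.Closed B → F.LtAttacks B A → F.LtAttacks E B

def LtAdmissible (F : ABAPlus L) (E : Set L) : Prop :=
  E ⊆ F.asms ∧ F.toABAF.Closed E ∧ F.LtConflictFree E ∧ F.LtDefends E E

def LtPreferred (F : ABAPlus L) (E : Set L) : Prop :=
  F.LtAdmissible E ∧ ∀ E', F.LtAdmissible E' → E ⊆ E' → E' = E

def LtComplete (F : ABAPlus L) (E : Set L) : Prop :=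
  F.LtAdmissible E ∧ ∀ A ⊆ F.asms, F.LtDefends E A → A ⊆ E

def LtStable (F : ABAPlus L) (E : Set L) : Prop :=
  E ⊆ F.asms ∧ F.toABAF.Closed E ∧ F.LtConflictFree E ∧
    ∀ β ∈ F.asms, β ∉ E → F.LtAttacks E {β}

def LtWellFounded (F : ABAPlus L) (E : Set L) : Prop :=
  E = ⋂₀ {E' | F.LtComplete E'}

def LtIdeal (F : ABAPlus L) (E : Set L) : Prop :=
  (F.LtAdmissible E ∧ ∀ P, F.LtPreferred P → E ⊆ P) ∧
    ∀ E', (F.LtAdmissible E' ∧ ∀ P, F.LtPreferred P → E' ⊆ P) → E ⊆ E' → E' = E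

/-- The Axiom of Weak Contraposition. -/
def WCP (F : ABAPlus L) : Prop :=
  ∀ A ⊆ F.asms, ∀ β ∈ F.asms,
    F.toABAF.Ded A (F.contrary β) → (∃ α' ∈ A, F.lt α' β) →
    ∃ α ∈ A, F.lt α β ∧ (∀ α'' ∈ A, F.lt α'' β → ¬ F.lt α'' α) ∧
      ∃ Aα ⊆ (A \ {α}) ∪ {β}, F.toABAF.Ded Aα (F.contrary α)

end ABAPlus

namespace ABAF

variable {L : Type u}

theorem Ded.mono {F : ABAF L} {S T : Set L} (hST : S ⊆ T) {φ : L}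
    (h : F.Ded S φ) : F.Ded T φ := by
  induction h with
  | assumption hφ => exact Ded.assumption (hST hφ)
  | rule hr _ ih => exact Ded.rule hr ih

theorem Ded.finite_support {F : ABAF L} {S : Set L} {φ : L} (h : F.Ded S φ) :
    ∃ T ⊆ S, T.Finite ∧ F.Ded T φ := by
  induction h with
  | @assumption φ hφ => exact ⟨{φ}, by simpa using hφ, Set.finite_singleton φ,
      Ded.assumption rfl⟩
  | @rule φ body hr _ ih =>
    choose T hTS hTfin hTd using ih
    refine ⟨⋃ ψ ∈ {x | x ∈ body}, T ψ ‹_›, ?_, ?_, ?_⟩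
    · intro x hx
      simp only [Set.mem_iUnion] at hx
      obtain ⟨ψ, hψ, hx⟩ := hx
      exact hTS ψ hψ hx
    · exact (List.finite_toSet body).biUnion' fun ψ hψ => hTfin ψ hψ
    · refine Ded.rule hr fun ψ hψ => (hTd ψ hψ).mono ?_
      intro x hx
      exact Set.mem_iUnion.2 ⟨ψ, Set.mem_iUnion.2 ⟨hψ, hx⟩⟩

end ABAF

namespace ABAPlus

variable {L : Type u}

theorem finite_subset_sUnion_chain {c : Set (Set L)} (hc : IsChain (· ⊆ ·) c)
    (hne : c.Nonempty) {T : Set L} (hT : T.Finite) (hTc : T ⊆ ⋃₀ c) :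
    ∃ E ∈ c, T ⊆ E := by
  revert hTc
  refine Set.Finite.induction_on (motive := fun s _ => s ⊆ ⋃₀ c → ∃ E ∈ c, s ⊆ E)
    T hT ?_ ?_
  · exact fun _ => ⟨hne.choose, hne.choose_spec, by simp⟩
  · intro a s _ _ ih hTc
    obtain ⟨E1, hE1, hsE1⟩ := ih fun x hx => hTc (Set.mem_insert_of_mem a hx)
    obtain ⟨E2, hE2, haE2⟩ := hTc (Set.mem_insert a s)
    rcases hc.total hE1 hE2 with hle | hle
    · exact ⟨E2, hE2, Set.insert_subset haE2 (hsE1.trans hle)⟩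
    · exact ⟨E1, hE1, Set.insert_subset (hle haE2) hsE1⟩

theorem ltAttacks_mono {F : ABAPlus L} {A A' B : Set L} (hA : A ⊆ A')
    (h : F.LtAttacks A B) : F.LtAttacks A' B := by
  rcases h with ⟨S, hS, β, hβ, hd, hlt⟩ | ⟨S, hS, α, hα, hd, hlt⟩
  · exact Or.inl ⟨S, hS.trans hA, β, hβ, hd, hlt⟩
  · exact Or.inr ⟨S, hS, α, hA hα, hd, hlt⟩

theorem empty_ltAdmissible {F : ABAPlus L} (h : F.toABAF.Closed ∅) :
    F.LtAdmissible ∅ := by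
  refine ⟨Set.empty_subset _, h, ?_, ?_⟩
  · rintro (⟨S, hS, β, hβ, -⟩ | ⟨S, hS, α, hα, -⟩)
    · exact hβ
    · exact hα
  · rintro B - - (⟨S, hS, β, hβ, -⟩ | ⟨S, hS, α, -, -, β', hβ', -⟩)
    · exact hβ.elim
    · exact (hS hβ').elim

theorem sUnion_ltAdmissible {F : ABAPlus L} {c : Set (Set L)}
    (hc : IsChain (· ⊆ ·) c) (hne : c.Nonempty)
    (hadm : ∀ E ∈ c, F.LtAdmissible E) : F.LtAdmissible (⋃₀ c) := by
  have key : ∀ B, F.LtAttacks (⋃₀ c) B → ∃ E ∈ c, F.LtAttacks E B := by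
    rintro B (⟨S, hS, β, hβ, hd, hlt⟩ | ⟨S, hS, α, ⟨E, hEc, hαE⟩, hd, hlt⟩)
    · obtain ⟨T, hTS, hTfin, hTd⟩ := hd.finite_support
      obtain ⟨E, hEc, hTE⟩ := finite_subset_sUnion_chain hc hne hTfin
        (hTS.trans hS)
      exact ⟨E, hEc, Or.inl ⟨T, hTE, β, hβ, hTd, fun a ha => hlt a (hTS ha)⟩⟩
    · exact ⟨E, hEc, Or.inr ⟨S, hS, α, hαE, hd, hlt⟩⟩
  refine ⟨?_, ?_, ?_, ?_⟩
  · exact fun x hx => by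
      obtain ⟨E, hEc, hxE⟩ := hx; exact (hadm E hEc).1 hxE
  · apply Set.Subset.antisymm
    · rintro x ⟨hdx, hxa⟩
      obtain ⟨T, hTS, hTfin, hTd⟩ := ABAF.Ded.finite_support hdx
      obtain ⟨E, hEc, hTE⟩ := finite_subset_sUnion_chain hc hne hTfin hTS
      have hxE : x ∈ F.toABAF.cl E := ⟨hTd.mono hTE, hxa⟩
      rw [(hadm E hEc).2.1] at hxE
      exact ⟨E, hEc, hxE⟩
    · rintro x hx
      exact ⟨ABAF.Ded.assumption hx, by
        obtain ⟨E, hEc, hxE⟩ := hx; exact (hadm E hEc).1 hxE⟩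
  · -- conflict free
    intro hatt
    have : ∃ E ∈ c, F.LtAttacks (⋃₀ c) E := by
      rcases hatt with ⟨S, hS, β, ⟨E, hEc, hβE⟩, hd, hlt⟩ |
        ⟨S, hS, α, hα, hd, β', hβ'S, hβ'lt⟩
      · exact ⟨E, hEc, Or.inl ⟨S, hS, β, hβE, hd, hlt⟩⟩
      · obtain ⟨T, hTS, hTfin, hTd⟩ := hd.finite_support
        obtain ⟨E2, hE2c, hTE2⟩ := finite_subset_sUnion_chain hc hne
          (hTfin.insert β') (Set.insert_subset (hS hβ'S) (hTS.trans hS))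
        exact ⟨E2, hE2c, Or.inr ⟨insert β' T, hTE2, α, hα,
          hTd.mono (Set.subset_insert β' T),
          β', Set.mem_insert β' T, hβ'lt⟩⟩
    obtain ⟨E, hEc, hattE⟩ := this
    obtain ⟨E', hE'c, hattE'⟩ := key E hattE
    rcases hc.total hEc hE'c with hle | hle
    · refine (hadm E' hE'c).2.2.1 ?_
      rcases hattE' with ⟨S, hS, β, hβ, hd, hlt⟩ | ⟨S, hS, α, hα, hd, hlt⟩
      · exact Or.inl ⟨S, hS, β, hle hβ, hd, hlt⟩
      · exact Or.inr ⟨S, hS.trans hle, α, hα, hd, hlt⟩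
    · exact (hadm E hEc).2.2.1 (ltAttacks_mono hle hattE')
  · -- defends
    intro B hB hBcl hBatt
    rcases hBatt with ⟨S, hS, β, ⟨E, hEc, hβE⟩, hd, hlt⟩ |
      ⟨S, hS, α, hα, hd, β', hβ'S, hβ'lt⟩
    · exact ltAttacks_mono (Set.subset_sUnion_of_mem hEc)
        ((hadm E hEc).2.2.2 B hB hBcl (Or.inl ⟨S, hS, β, hβE, hd, hlt⟩))
    · obtain ⟨T, hTS, hTfin, hTd⟩ := hd.finite_support
      obtain ⟨E, hEc, hTE⟩ := finite_subset_sUnion_chain hc hne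
        (hTfin.insert β') (Set.insert_subset (hS hβ'S) (hTS.trans hS))
      exact ltAttacks_mono (Set.subset_sUnion_of_mem hEc)
        ((hadm E hEc).2.2.2 B hB hBcl (Or.inr ⟨insert β' T, hTE, α, hα,
          hTd.mono (Set.subset_insert β' T),
          β', Set.mem_insert β' T, hβ'lt⟩))

end ABAPlus

/-- If the empty set of assumptions is closed, then there exists a
<-preferred extension and an <-ideal extension. -/
theorem ABAPlus.exists_ltPreferred_and_ltIdeal {L : Type u} (F : ABAPlus L)
    (h : F.toABAF.Closed ∅) :
    (∃ E, F.LtPreferred E) ∧ (∃ E, F.LtIdeal E) := by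
  have hemp := ABAPlus.empty_ltAdmissible h
  have hpref : ∃ E, F.LtPreferred E := by
    obtain ⟨m, -, hm⟩ := zorn_subset_nonempty {E | F.LtAdmissible E}
      (fun c hcS hc hne => ⟨⋃₀ c, ABAPlus.sUnion_ltAdmissible hc hne
        (fun E hE => hcS hE), fun s hs => Set.subset_sUnion_of_mem hs⟩)
      ∅ hemp
    exact ⟨m, hm.1, fun E' hE' hmE' => (hm.eq_of_subset hE' hmE').symm⟩
  refine ⟨hpref, ?_⟩
  obtain ⟨m, -, hm⟩ := zorn_subset_nonempty
    {E | F.LtAdmissible E ∧ ∀ P, F.LtPreferred P → E ⊆ P}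
    (fun c hcS hc hne => ⟨⋃₀ c,
      ⟨ABAPlus.sUnion_ltAdmissible hc hne (fun E hE => (hcS hE).1),
       fun P hP => Set.sUnion_subset fun E hE => (hcS hE).2 P hP⟩,
      fun s hs => Set.subset_sUnion_of_mem hs⟩)
    ∅ ⟨hemp, fun P _ => Set.empty_subset P⟩
  exact ⟨m, hm.1, fun E' hE' hmE' => (hm.eq_of_subset hE' hmE').symm⟩
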